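/- The action of S_n on R = ℤ[x_1,…,x_n] ⊗ Λ(ω_1,…,ω_n), where s_i(x_j) = x_{s_i(j)} and s_i(ω_j) = ω_j + δ_{i,j}(x_i − x_{i+1})ω_{i+1}, defines a group action, i.e. the assignments satisfy the Coxeter relations s_i² = 1, (s_i s_{i+1})³ = 1, and s_i s_j = s_j s_i for |i−j|>1. -/

import Mathlib

open MvPolynomial

/-- Action of `s_i` on polynomials: rename by the swap of the variables `x_i, x_{i+1}`. -/
noncomputable def sSwap (n i : ℕ) (h : i + 1 < n) :
    MvPolynomial (Fin n) ℤ → MvPolynomial (Fin n) ℤ :=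
  fun f => rename ⇑(Equiv.swap (⟨i, Nat.lt_of_succ_lt h⟩ : Fin n) ⟨i + 1, h⟩) f

/-- Action of `s_i` on the degree-one part `⊕_j ℤ[x]·ω_j` of `ℤ[x]⊗Λ(ω)`, encoded in the
basis `ω_0,…,ω_{n−1}` (0-based): `s_i(Σ c_j ω_j) = Σ s_i(c_j) s_i(ω_j)` with
`s_i(ω_j) = ω_j + δ_{i,j}(x_i − x_{i+1})·ω_{i+1}`. -/
noncomputable def Sact (n i : ℕ) (h : i + 1 < n)
    (v : Fin n → MvPolynomial (Fin n) ℤ) : Fin n → MvPolynomial (Fin n) ℤ :=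
  fun j =>
    (if (j : ℕ) = i + 1 then
        (X (⟨i, Nat.lt_of_succ_lt h⟩ : Fin n) - X ⟨i + 1, h⟩) *
          sSwap n i h (v ⟨i, Nat.lt_of_succ_lt h⟩)
      else 0) +
    sSwap n i h (v j)

lemma sSwap_sSwap (n i : ℕ) (h : i+1<n) (f : MvPolynomial (Fin n) ℤ) :
    sSwap n i h (sSwap n i h f) = f := by
  simp only [sSwap, rename_rename, Function.comp_def, Equiv.swap_apply_self]
  exact rename_id_apply f

lemma sSwap_add (n i : ℕ) (h : i+1<n) (f g : MvPolynomial (Fin n) ℤ) :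
    sSwap n i h (f + g) = sSwap n i h f + sSwap n i h g := map_add _ _ _

lemma sSwap_mul (n i : ℕ) (h : i+1<n) (f g : MvPolynomial (Fin n) ℤ) :
    sSwap n i h (f * g) = sSwap n i h f * sSwap n i h g := map_mul _ _ _

lemma sSwap_sub (n i : ℕ) (h : i+1<n) (f g : MvPolynomial (Fin n) ℤ) :
    sSwap n i h (f - g) = sSwap n i h f - sSwap n i h g := map_sub _ _ _

lemma sSwap_zero (n i : ℕ) (h : i+1<n) : sSwap n i h 0 = 0 := map_zero _

lemma sSwap_X (n i : ℕ) (h : i+1<n) (k : Fin n) :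
    sSwap n i h (X k) = X (Equiv.swap (⟨i, Nat.lt_of_succ_lt h⟩ : Fin n) ⟨i + 1, h⟩ k) :=
  rename_X _ _

-- perm braid: τστ = στσ pointwise for a=i,b=i+1,c=i+2
lemma swap_braid {n : ℕ} (a b c : Fin n) (hab : a ≠ b) (hbc : b ≠ c) (hac : a ≠ c) (x : Fin n) :
    Equiv.swap b c (Equiv.swap a b (Equiv.swap b c x)) =
    Equiv.swap a b (Equiv.swap b c (Equiv.swap a b x)) := by
  rcases eq_or_ne x a with rfl|hxa <;> rcases eq_or_ne x b with rfl|hxb <;>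
    rcases eq_or_ne x c with rfl|hxc <;>
    simp_all [Equiv.swap_apply_of_ne_of_ne, Equiv.swap_apply_left, Equiv.swap_apply_right,
      hab.symm, hbc.symm, hac.symm]

lemma swap_comm' {n : ℕ} (a b c d : Fin n) (hac : a ≠ c) (had : a ≠ d) (hbc : b ≠ c)
    (hbd : b ≠ d) (x : Fin n) :
    Equiv.swap a b (Equiv.swap c d x) = Equiv.swap c d (Equiv.swap a b x) := by
  rcases eq_or_ne x a with rfl|hxa <;> rcases eq_or_ne x b with rfl|hxb <;>
    rcases eq_or_ne x c with rfl|hxc <;> rcases eq_or_ne x d with rfl|hxd <;>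
    simp_all [Equiv.swap_apply_of_ne_of_ne, Equiv.swap_apply_left, Equiv.swap_apply_right,
      hac.symm, had.symm, hbc.symm, hbd.symm]

lemma sSwap_braid3 (n i : ℕ) (h : i + 2 < n) (f : MvPolynomial (Fin n) ℤ) :
    sSwap n (i+1) h (sSwap n i (Nat.lt_of_succ_lt h) (sSwap n (i+1) h f)) =
    sSwap n i (Nat.lt_of_succ_lt h) (sSwap n (i+1) h (sSwap n i (Nat.lt_of_succ_lt h) f)) := by
  simp only [sSwap, rename_rename, Function.comp_def]
  congr 2
  funext x
  exact swap_braid ⟨i, by omega⟩ ⟨i+1, by omega⟩ ⟨i+2, by omega⟩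
    (by simp [Fin.ext_iff]) (by simp [Fin.ext_iff]) (by simp [Fin.ext_iff]) x

lemma sSwap_comm (n i j : ℕ) (hi : i + 1 < n) (hj : j + 1 < n) (hij : i + 1 < j)
    (f : MvPolynomial (Fin n) ℤ) :
    sSwap n i hi (sSwap n j hj f) = sSwap n j hj (sSwap n i hi f) := by
  simp only [sSwap, rename_rename, Function.comp_def]
  congr 2
  funext x
  exact swap_comm' _ _ _ _ (by simp [Fin.ext_iff]; omega) (by simp [Fin.ext_iff]; omega)
    (by simp [Fin.ext_iff]; omega) (by simp [Fin.ext_iff]; omega) x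

lemma sSwap_d (n i : ℕ) (h : i + 1 < n) :
    sSwap n i h (X (⟨i, Nat.lt_of_succ_lt h⟩ : Fin n) - X ⟨i + 1, h⟩) =
      -(X (⟨i, Nat.lt_of_succ_lt h⟩ : Fin n) - X ⟨i + 1, h⟩) := by
  rw [sSwap_sub, sSwap_X, sSwap_X, Equiv.swap_apply_left, Equiv.swap_apply_right]
  ring

lemma Sact_invol (n i : ℕ) (h : i + 1 < n) (v : Fin n → MvPolynomial (Fin n) ℤ) :
    Sact n i h (Sact n i h v) = v := by
  funext j
  simp only [Sact]
  by_cases hb : (j : ℕ) = i + 1 <;>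
    simp [hb, sSwap_add, sSwap_mul, sSwap_d, sSwap_sSwap]
  ring

lemma Sact_braid3 (n i : ℕ) (h : i + 2 < n) (v : Fin n → MvPolynomial (Fin n) ℤ) :
    Sact n (i+1) h (Sact n i (Nat.lt_of_succ_lt h) (Sact n (i+1) h v)) =
    Sact n i (Nat.lt_of_succ_lt h) (Sact n (i+1) h (Sact n i (Nat.lt_of_succ_lt h) v)) := by
  have e1 : i ≠ i + 1 + 1 := by omega
  have e2 : i + 1 + 1 ≠ i := by omega
  funext j
  rcases eq_or_ne (j:ℕ) (i+1) with hb|hb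
  · have hj : j = ⟨i+1, Nat.lt_of_succ_lt h⟩ := Fin.ext hb
    subst hj
    simp [Sact, sSwap_add, sSwap_mul, sSwap_sub, sSwap_X, Equiv.swap_apply_def,
      Fin.ext_iff, sSwap_braid3, e1, e2]
    ring
  rcases eq_or_ne (j:ℕ) (i+2) with hc|hc
  · have hj : j = ⟨i+2, h⟩ := Fin.ext hc
    subst hj
    simp [Sact, sSwap_add, sSwap_mul, sSwap_sub, sSwap_X, Equiv.swap_apply_def,
      Fin.ext_iff, sSwap_braid3, e1, e2]
    ring
  · simp [Sact, hb, hc, sSwap_add, sSwap_mul, sSwap_sub, sSwap_X, Equiv.swap_apply_def,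
      Fin.ext_iff, sSwap_braid3, e1, e2]

lemma Sact_comm (n i j : ℕ) (hi : i + 1 < n) (hj : j + 1 < n) (hij : i + 1 < j)
    (v : Fin n → MvPolynomial (Fin n) ℤ) :
    Sact n i hi (Sact n j hj v) = Sact n j hj (Sact n i hi v) := by
  have e1 : i ≠ j := by omega
  have e2 : i ≠ j + 1 := by omega
  have e3 : i + 1 ≠ j := by omega
  have e4 : i + 1 ≠ j + 1 := by omega
  funext k
  rcases eq_or_ne (k:ℕ) (i+1) with hb|hb
  · have hk : k = ⟨i+1, hi⟩ := Fin.ext hb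
    subst hk
    simp [Sact, sSwap_add, sSwap_mul, sSwap_sub, sSwap_X, Equiv.swap_apply_def,
      Fin.ext_iff, sSwap_comm n i j hi hj hij, e1, e2, e3, e4, e1.symm, e2.symm, e3.symm, e4.symm]
  rcases eq_or_ne (k:ℕ) (j+1) with hc|hc
  · have hk : k = ⟨j+1, hj⟩ := Fin.ext hc
    subst hk
    simp [Sact, sSwap_add, sSwap_mul, sSwap_sub, sSwap_X, Equiv.swap_apply_def,
      Fin.ext_iff, sSwap_comm n i j hi hj hij, e1, e2, e3, e4, e1.symm, e2.symm, e3.symm, e4.symm]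
  · simp [Sact, hb, hc, sSwap_add, sSwap_mul, sSwap_sub, sSwap_X, Equiv.swap_apply_def,
      Fin.ext_iff, sSwap_comm n i j hi hj hij, e1, e2, e3, e4, e1.symm, e2.symm, e3.symm, e4.symm]


/-- The assignments `s_i(x_j) = x_{s_i(j)}`, `s_i(ω_j) = ω_j + δ_{i,j}(x_i − x_{i+1})ω_{i+1}`
satisfy the Coxeter relations `s_i² = 1`, `(s_i s_{i+1})³ = 1`, and `s_i s_j = s_j s_i` for
`|i − j| > 1`, both on the polynomial part and on the `ω`-part; hence they define an
`S_n`-action on `R = ℤ[x_1,…,x_n] ⊗ Λ(ω_1,…,ω_n)`. -/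
theorem snAction_coxeter (n : ℕ) :
    (∀ (i : ℕ) (h : i + 1 < n) (f : MvPolynomial (Fin n) ℤ),
      sSwap n i h (sSwap n i h f) = f) ∧
    (∀ (i : ℕ) (h : i + 1 < n) (v : Fin n → MvPolynomial (Fin n) ℤ),
      Sact n i h (Sact n i h v) = v) ∧
    (∀ (i : ℕ) (h : i + 2 < n) (f : MvPolynomial (Fin n) ℤ),
      sSwap n i (Nat.lt_of_succ_lt h) (sSwap n (i + 1) h
        (sSwap n i (Nat.lt_of_succ_lt h) (sSwap n (i + 1) h
          (sSwap n i (Nat.lt_of_succ_lt h) (sSwap n (i + 1) h f))))) = f) ∧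
    (∀ (i : ℕ) (h : i + 2 < n) (v : Fin n → MvPolynomial (Fin n) ℤ),
      Sact n i (Nat.lt_of_succ_lt h) (Sact n (i + 1) h
        (Sact n i (Nat.lt_of_succ_lt h) (Sact n (i + 1) h
          (Sact n i (Nat.lt_of_succ_lt h) (Sact n (i + 1) h v))))) = v) ∧
    (∀ (i j : ℕ) (hi : i + 1 < n) (hj : j + 1 < n), i + 1 < j →
      (∀ f : MvPolynomial (Fin n) ℤ,
        sSwap n i hi (sSwap n j hj f) = sSwap n j hj (sSwap n i hi f)) ∧
      (∀ v : Fin n → MvPolynomial (Fin n) ℤ,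
        Sact n i hi (Sact n j hj v) = Sact n j hj (Sact n i hi v))) := by
  refine ⟨sSwap_sSwap n, Sact_invol n, ?_, ?_, ?_⟩
  · intro i h f
    rw [sSwap_braid3 n i h, sSwap_sSwap, sSwap_sSwap, sSwap_sSwap]
  · intro i h v
    rw [Sact_braid3 n i h, Sact_invol, Sact_invol, Sact_invol]
  · intro i j hi hj hij
    exact ⟨sSwap_comm n i j hi hj hij, Sact_comm n i j hi hj hij⟩
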